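/- Let k be a perfect field of characteristic p > 2, S a polynomial ring over k, and I a radical homogeneous ideal such that S/I is F-split. Then the Rees-like algebra RL(I) = S[It,t^2] is F-split. -/

import Mathlib

open Polynomial

/-- The Rees-like algebra `S[It, t²]`: the `S`-subalgebra of `S[t]` generated by
`{f·t : f ∈ I}` and `t²`. -/
noncomputable def ReesLike (S : Type*) [CommRing S] (I : Ideal S) : Subalgebra S (Polynomial S) :=
  Algebra.adjoin S ({p : Polynomial S | ∃ a ∈ I, p = Polynomial.C a * Polynomial.X} ∪
    {Polynomial.X ^ 2})

/-- A ring `A` of characteristic `p` is *F-split* if the Frobenius `A → A` splits as a map of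
`A`-modules, i.e. there is an additive map `φ : A → A` with `φ(1) = 1` and
`φ(aᵖ·b) = a·φ(b)` for all `a b : A`. -/
def IsFSplit (p : ℕ) (A : Type*) [CommRing A] : Prop :=
  ∃ φ : A →+ A, φ 1 = 1 ∧ ∀ a b : A, φ (a ^ p * b) = a * φ b

namespace FSplitAux

variable (p : ℕ)

/-! ### Division with remainder for multi-indices -/

noncomputable def qd {n : ℕ} (d : Fin n →₀ ℕ) : Fin n →₀ ℕ := d.mapRange (· / p) (Nat.zero_div p)
noncomputable def rd {n : ℕ} (d : Fin n →₀ ℕ) : Fin n →₀ ℕ := d.mapRange (· % p) (Nat.zero_mod p)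

lemma qd_rd {n : ℕ} (d : Fin n →₀ ℕ) : p • qd p d + rd p d = d := by
  ext j; simp [qd, rd, Finsupp.mapRange_apply, Nat.div_add_mod]

@[simp] lemma qd_zero {n : ℕ} : qd p (0 : Fin n →₀ ℕ) = 0 := Finsupp.mapRange_zero
@[simp] lemma rd_zero {n : ℕ} : rd p (0 : Fin n →₀ ℕ) = 0 := Finsupp.mapRange_zero

lemma qd_single_add {n : ℕ} (hp : 0 < p) (i : Fin n) (d : Fin n →₀ ℕ) :
    qd p (Finsupp.single i p + d) = Finsupp.single i 1 + qd p d := by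
  ext j
  by_cases hj : j = i
  · subst hj
    simp only [qd, Finsupp.mapRange_apply, Finsupp.add_apply, Finsupp.single_eq_same]
    rw [add_comm p (d j), Nat.add_div_right _ hp, add_comm]
  · simp [qd, Finsupp.mapRange_apply, Finsupp.single_apply, Ne.symm hj]

lemma rd_single_add {n : ℕ} (i : Fin n) (d : Fin n →₀ ℕ) :
    rd p (Finsupp.single i p + d) = rd p d := by
  ext j
  by_cases hj : j = i
  · subst hj
    simp only [rd, Finsupp.mapRange_apply, Finsupp.add_apply, Finsupp.single_eq_same]
    exact Nat.add_mod_left p (d j)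
  · simp [rd, Finsupp.mapRange_apply, Finsupp.single_apply, Ne.symm hj]

/-! ### The lifted splitting on the polynomial ring -/

variable {k : Type*} [Field k] [Fact p.Prime] [CharP k p] [PerfectRing k p] {n : ℕ}

noncomputable def phi (t : (Fin n →₀ ℕ) → MvPolynomial (Fin n) k)
    (f : MvPolynomial (Fin n) k) : MvPolynomial (Fin n) k :=
  ∑ d ∈ f.support,
    MvPolynomial.monomial (qd p d) ((frobeniusEquiv k p).symm (MvPolynomial.coeff d f))
      * t (rd p d)

lemma phi_eq_sum (t : (Fin n →₀ ℕ) → MvPolynomial (Fin n) k)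
    (f : MvPolynomial (Fin n) k) {A : Finset (Fin n →₀ ℕ)} (hA : f.support ⊆ A) :
    phi p t f = ∑ d ∈ A,
      MvPolynomial.monomial (qd p d) ((frobeniusEquiv k p).symm (MvPolynomial.coeff d f))
        * t (rd p d) := by
  refine Finset.sum_subset hA fun d _ hd => ?_
  simp [MvPolynomial.notMem_support_iff.mp hd]

lemma phi_add (t : (Fin n →₀ ℕ) → MvPolynomial (Fin n) k)
    (f g : MvPolynomial (Fin n) k) : phi p t (f + g) = phi p t f + phi p t g := by
  classical
  rw [phi_eq_sum p t (f + g) (A := f.support ∪ g.support) (MvPolynomial.support_add),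
    phi_eq_sum p t f (A := f.support ∪ g.support) Finset.subset_union_left,
    phi_eq_sum p t g (A := f.support ∪ g.support) Finset.subset_union_right,
    ← Finset.sum_add_distrib]
  refine Finset.sum_congr rfl fun d _ => ?_
  rw [MvPolynomial.coeff_add, map_add, map_add, add_mul]

lemma phi_monomial (t : (Fin n →₀ ℕ) → MvPolynomial (Fin n) k) (d : Fin n →₀ ℕ) (c : k) :
    phi p t (MvPolynomial.monomial d c)
      = MvPolynomial.monomial (qd p d) ((frobeniusEquiv k p).symm c) * t (rd p d) := by
  classical
  rcases eq_or_ne c 0 with rfl | hc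
  · simp [phi, MvPolynomial.support_monomial]
  · simp [phi, MvPolynomial.support_monomial, hc, MvPolynomial.coeff_monomial]

noncomputable def phiHom (t : (Fin n →₀ ℕ) → MvPolynomial (Fin n) k) :
    MvPolynomial (Fin n) k →+ MvPolynomial (Fin n) k :=
  AddMonoidHom.mk' (phi p t) (phi_add p t)

lemma phi_sum (t : (Fin n →₀ ℕ) → MvPolynomial (Fin n) k) {ι : Type*} (A : Finset ι)
    (g : ι → MvPolynomial (Fin n) k) :
    phi p t (∑ i ∈ A, g i) = ∑ i ∈ A, phi p t (g i) :=
  map_sum (phiHom p t) g A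

lemma phi_one (t : (Fin n →₀ ℕ) → MvPolynomial (Fin n) k) (ht0 : t 0 = 1) :
    phi p t 1 = 1 := by
  have h1 : (1 : MvPolynomial (Fin n) k) = MvPolynomial.monomial 0 1 := by
    rw [MvPolynomial.monomial_zero', map_one]
  rw [h1, phi_monomial, qd_zero, rd_zero, ht0, mul_one, map_one, MvPolynomial.monomial_zero',
    map_one]

lemma phi_C_pow_mul (t : (Fin n →₀ ℕ) → MvPolynomial (Fin n) k) (a : k)
    (f : MvPolynomial (Fin n) k) :
    phi p t (MvPolynomial.C a ^ p * f) = MvPolynomial.C a * phi p t f := by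
  conv_lhs => rw [MvPolynomial.as_sum f]
  conv_rhs => rw [MvPolynomial.as_sum f]
  rw [Finset.mul_sum, phi_sum, phi_sum, Finset.mul_sum]
  refine Finset.sum_congr rfl fun d _ => ?_
  rw [← map_pow, MvPolynomial.C_mul_monomial, phi_monomial, phi_monomial, map_mul]
  have ha : (frobeniusEquiv k p).symm (a ^ p) = a := by
    rw [← frobenius_def, frobeniusEquiv_symm_apply_frobenius]
  rw [ha, ← MvPolynomial.C_mul_monomial, mul_assoc]

lemma phi_X_pow_mul (hp : 0 < p) (t : (Fin n →₀ ℕ) → MvPolynomial (Fin n) k) (i : Fin n)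
    (f : MvPolynomial (Fin n) k) :
    phi p t (MvPolynomial.X i ^ p * f) = MvPolynomial.X i * phi p t f := by
  conv_lhs => rw [MvPolynomial.as_sum f]
  conv_rhs => rw [MvPolynomial.as_sum f]
  rw [Finset.mul_sum, phi_sum, phi_sum, Finset.mul_sum]
  refine Finset.sum_congr rfl fun d _ => ?_
  rw [MvPolynomial.X_pow_eq_monomial, MvPolynomial.monomial_mul, one_mul, phi_monomial,
    phi_monomial, qd_single_add p hp, rd_single_add]
  have hX : (MvPolynomial.X i : MvPolynomial (Fin n) k)
      = MvPolynomial.monomial (Finsupp.single i 1) 1 := by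
    rw [← MvPolynomial.X_pow_eq_monomial, pow_one]
  rw [hX, ← mul_assoc, MvPolynomial.monomial_mul, one_mul]

lemma phi_pow_mul (hp : 0 < p) (t : (Fin n →₀ ℕ) → MvPolynomial (Fin n) k)
    (g f : MvPolynomial (Fin n) k) :
    phi p t (g ^ p * f) = g * phi p t f := by
  induction g using MvPolynomial.induction_on generalizing f with
  | C a => exact phi_C_pow_mul p t a f
  | add g h ihg ihh =>
    rw [add_pow_char, add_mul, phi_add, ihg, ihh, ← add_mul]
  | mul_X g i ih =>
    rw [mul_pow, mul_assoc, ih (MvPolynomial.X i ^ p * f), phi_X_pow_mul p hp, ← mul_assoc]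

set_option maxHeartbeats 800000 in
set_option synthInstance.maxHeartbeats 200000 in
lemma phi_mk (t : (Fin n →₀ ℕ) → MvPolynomial (Fin n) k) (I : Ideal (MvPolynomial (Fin n) k))
    (ψ : (MvPolynomial (Fin n) k ⧸ I) →+ (MvPolynomial (Fin n) k ⧸ I))
    (ht : ∀ e, Ideal.Quotient.mk I (t e)
        = ψ (Ideal.Quotient.mk I (MvPolynomial.monomial e 1)))
    (hψ : ∀ a b, ψ (a ^ p * b) = a * ψ b) (f : MvPolynomial (Fin n) k) :
    Ideal.Quotient.mk I (phi p t f) = ψ (Ideal.Quotient.mk I f) := by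
  conv_lhs => rw [MvPolynomial.as_sum f]
  conv_rhs => rw [MvPolynomial.as_sum f]
  rw [phi_sum, map_sum, map_sum, map_sum]
  refine Finset.sum_congr rfl fun d _ => ?_
  rw [phi_monomial, map_mul, ht, ← hψ, ← map_pow, ← map_mul, MvPolynomial.monomial_pow,
    MvPolynomial.monomial_mul, frobeniusEquiv_symm_pow_p, mul_one, qd_rd]

/-! ### The splitting on `S[t]` obtained by keeping only `t`-exponents divisible by `p` -/

variable {R : Type*} [CommRing R] (φ : R →+ R)

noncomputable def psi (f : R[X]) : R[X] :=
  ∑ m ∈ Finset.range (f.natDegree + 1), C (φ (f.coeff (p * m))) * X ^ m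

lemma coeff_psi (hp : 0 < p) (f : R[X]) (m : ℕ) :
    (psi p φ f).coeff m = φ (f.coeff (p * m)) := by
  classical
  rw [psi, finset_sum_coeff]
  simp only [coeff_C_mul, coeff_X_pow, mul_ite, mul_one, mul_zero, Finset.sum_ite_eq',
    Finset.sum_ite_eq, Finset.mem_range]
  split
  · rfl
  · next h =>
    rw [coeff_eq_zero_of_natDegree_lt, map_zero]
    calc f.natDegree < m := by omega
    _ ≤ p * m := Nat.le_mul_of_pos_left m hp

lemma psi_add (hp : 0 < p) (f g : R[X]) : psi p φ (f + g) = psi p φ f + psi p φ g := by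
  ext m
  simp [coeff_psi p φ hp, coeff_add]

lemma psi_one (hp : 0 < p) (hφ1 : φ 1 = 1) : psi p φ (1 : R[X]) = 1 := by
  ext m
  rw [coeff_psi p φ hp]
  by_cases hm : m = 0
  · subst hm; simp [coeff_one, hφ1]
  · rw [coeff_one, coeff_one, if_neg (Nat.mul_ne_zero (by omega) hm), if_neg hm, map_zero]

lemma psi_X_pow_mul (hp : 0 < p) (f : R[X]) :
    psi p φ (X ^ p * f) = X * psi p φ f := by
  ext m
  rw [coeff_psi p φ hp, mul_comm (X ^ p) f, coeff_mul_X_pow', mul_comm X (psi p φ f),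
    ← pow_one (X : R[X]), coeff_mul_X_pow']
  rcases Nat.eq_zero_or_pos m with rfl | hm
  · rw [if_neg (by omega), if_neg (by simpa using hp.ne'), map_zero]
  · rw [if_pos (Nat.le_mul_of_pos_right p hm), if_pos (show 1 ≤ m from hm),
      coeff_psi p φ hp, Nat.mul_sub, mul_one]

lemma psi_pow_mul [Fact p.Prime] [CharP R p] (hφ : ∀ a b, φ (a ^ p * b) = a * φ b)
    (g f : R[X]) : psi p φ (g ^ p * f) = g * psi p φ f := by
  have hp : 0 < p := (Fact.out : p.Prime).pos
  induction g using Polynomial.induction_on generalizing f with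
  | C a =>
    ext m
    rw [coeff_psi p φ hp, ← map_pow, coeff_C_mul, hφ, coeff_C_mul, coeff_psi p φ hp]
  | add g h ihg ihh =>
    rw [add_pow_char, add_mul, psi_add p φ hp, ihg, ihh, ← add_mul]
  | monomial n a ih =>
    rw [pow_succ, ← mul_assoc, mul_pow, mul_assoc, ih (X ^ p * f), psi_X_pow_mul p φ hp,
      ← mul_assoc]

/-! ### Characterisation of the Rees-like algebra -/

lemma mem_reesLike_iff {S : Type*} [CommRing S] (I : Ideal S) (f : S[X]) :
    f ∈ ReesLike S I ↔ ∀ i : ℕ, Odd i → f.coeff i ∈ I := by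
  constructor
  · intro hf
    induction hf using Algebra.adjoin_induction with
    | mem x hx =>
      intro i hi
      rcases hx with ⟨a, ha, rfl⟩ | rfl
      · rw [coeff_C_mul, coeff_X]
        split
        · next h => rw [mul_one]; exact ha
        · rw [mul_zero]; exact I.zero_mem
      · rw [coeff_X_pow]
        split
        · next h => exact absurd (h ▸ hi) (by decide)
        · exact I.zero_mem
    | algebraMap r =>
      intro i hi
      rw [Polynomial.algebraMap_eq, coeff_C, if_neg hi.pos.ne']
      exact I.zero_mem
    | add x y hx hy ihx ihy =>
      intro i hi
      rw [coeff_add]; exact I.add_mem (ihx i hi) (ihy i hi)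
    | mul x y hx hy ihx ihy =>
      intro i hi
      rw [coeff_mul]
      refine Ideal.sum_mem _ ?_
      rintro ⟨j, l⟩ hjl
      rw [Finset.HasAntidiagonal.mem_antidiagonal] at hjl
      rcases Nat.even_or_odd j with hj | hj
      · have hl : Odd l := by
          refine Nat.not_even_iff_odd.mp fun hle => ?_
          exact (Nat.not_odd_iff_even.mpr hj) ((Nat.odd_add.mp (hjl ▸ hi)).mpr hle)
        exact I.mul_mem_left _ (ihy l hl)
      · exact I.mul_mem_right _ (ihx j hj)
  · intro h
    rw [as_sum_range f]
    refine Subalgebra.sum_mem _ fun i _ => ?_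
    rw [← C_mul_X_pow_eq_monomial]
    rcases Nat.even_or_odd i with hi | hi
    · obtain ⟨m, rfl⟩ := hi
      have hx : (X : S[X]) ^ (m + m) = (X ^ 2) ^ m := by rw [← pow_mul, two_mul]
      rw [hx]
      have h1 : (C (f.coeff (m + m)) : S[X]) ∈ ReesLike S I := by
        rw [← Polynomial.algebraMap_eq]; exact Subalgebra.algebraMap_mem _ _
      have h2 : ((X : S[X]) ^ 2) ∈ ReesLike S I := Algebra.subset_adjoin (Or.inr rfl)
      exact Subalgebra.mul_mem _ h1 (Subalgebra.pow_mem _ h2 m)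
    · obtain ⟨m, rfl⟩ := hi
      have hx : C (f.coeff (2 * m + 1)) * X ^ (2 * m + 1)
          = (C (f.coeff (2 * m + 1)) * X) * (X ^ 2) ^ m := by
        rw [pow_succ, ← pow_mul]; ring
      rw [hx]
      have h1 : (C (f.coeff (2 * m + 1)) * X : S[X]) ∈ ReesLike S I :=
        Algebra.subset_adjoin (Or.inl ⟨_, h _ ⟨m, rfl⟩, rfl⟩)
      have h2 : ((X : S[X]) ^ 2) ∈ ReesLike S I := Algebra.subset_adjoin (Or.inr rfl)
      exact Subalgebra.mul_mem _ h1 (Subalgebra.pow_mem _ h2 m)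

end FSplitAux

/-- **Theorem (Fsplit, ⇒).** Let `k` be a perfect field of characteristic `p > 2`,
`S = k[x 1, …, x n]`, and `I` a radical homogeneous ideal such that `S/I` is F-split.
Then the Rees-like algebra `S[It, t²]` is F-split. -/
theorem reesLike_isFSplit_of_quotient_isFSplit
    (k : Type*) [Field k] (p : ℕ) [Fact p.Prime] [CharP k p] [PerfectRing k p] (hp : 2 < p)
    (n : ℕ) (I : Ideal (MvPolynomial (Fin n) k))
    (hhom : ∀ q ∈ I, ∀ d : ℕ, MvPolynomial.homogeneousComponent d q ∈ I)
    (hrad : I.IsRadical)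
    (hsplit : IsFSplit p (MvPolynomial (Fin n) k ⧸ I)) :
    IsFSplit p (ReesLike (MvPolynomial (Fin n) k) I) := by
  classical
  obtain ⟨ψ, hψ1, hψ⟩ := hsplit
  have hp0 : 0 < p := (Fact.out : p.Prime).pos
  have hodd : Odd p := (Fact.out : p.Prime).odd_of_ne_two (by omega)
  choose lift hlift using fun e : Fin n →₀ ℕ =>
    Ideal.Quotient.mk_surjective (I := I) (ψ (Ideal.Quotient.mk I (MvPolynomial.monomial e 1)))
  set t : (Fin n →₀ ℕ) → MvPolynomial (Fin n) k := fun e => if e = 0 then 1 else lift e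
    with htdef
  have ht0 : t 0 = 1 := by rw [htdef]; simp
  have ht : ∀ e, Ideal.Quotient.mk I (t e)
      = ψ (Ideal.Quotient.mk I (MvPolynomial.monomial e 1)) := by
    intro e
    by_cases he : e = 0
    · subst he
      have h1 : (MvPolynomial.monomial (0 : Fin n →₀ ℕ) (1 : k)) = 1 := by
        rw [MvPolynomial.monomial_zero', map_one]
      rw [ht0, h1, map_one, hψ1]
    · rw [htdef]
      simp only [if_neg he]
      exact hlift e
  have hφmk : ∀ f, Ideal.Quotient.mk I (FSplitAux.phi p t f) = ψ (Ideal.Quotient.mk I f) :=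
    FSplitAux.phi_mk p t I ψ ht hψ
  have hφI : ∀ a ∈ I, FSplitAux.phi p t a ∈ I := by
    intro a ha
    rw [← Ideal.Quotient.eq_zero_iff_mem, hφmk, Ideal.Quotient.eq_zero_iff_mem.mpr ha, map_zero]
  have hφ1 : FSplitAux.phi p t 1 = 1 := FSplitAux.phi_one p t ht0
  have hφmul := FSplitAux.phi_pow_mul p hp0 t
  set φ' : MvPolynomial (Fin n) k →+ MvPolynomial (Fin n) k := FSplitAux.phiHom p t with hφ'def
  have hcoe : ⇑φ' = FSplitAux.phi p t := rfl
  have hmem : ∀ a : ReesLike (MvPolynomial (Fin n) k) I,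
      FSplitAux.psi p φ' (a : Polynomial (MvPolynomial (Fin n) k))
        ∈ ReesLike (MvPolynomial (Fin n) k) I := by
    intro a
    rw [FSplitAux.mem_reesLike_iff]
    intro i hi
    rw [FSplitAux.coeff_psi p φ' hp0, hcoe]
    exact hφI _ ((FSplitAux.mem_reesLike_iff I _).mp a.2 (p * i) (hodd.mul hi))
  refine ⟨AddMonoidHom.mk' (fun a => ⟨FSplitAux.psi p φ' a.1, hmem a⟩) ?_, ?_, ?_⟩
  · intro a b
    refine Subtype.ext ?_
    show FSplitAux.psi p φ' ((a + b : ReesLike (MvPolynomial (Fin n) k) I) :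
        Polynomial (MvPolynomial (Fin n) k)) = _
    rw [Subalgebra.coe_add, FSplitAux.psi_add p φ' hp0]
    rfl
  · exact Subtype.ext (FSplitAux.psi_one p φ' hp0 (by rw [hcoe]; exact hφ1))
  · intro a b
    refine Subtype.ext ?_
    show FSplitAux.psi p φ' ((a ^ p * b : ReesLike (MvPolynomial (Fin n) k) I) :
        Polynomial (MvPolynomial (Fin n) k)) = _
    rw [MulMemClass.coe_mul, SubmonoidClass.coe_pow,
      FSplitAux.psi_pow_mul p φ' (fun x y => by rw [hcoe]; exact hφmul x y)]
    rfl
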